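/- Let N ≥ 2 and 2N/(N+1) < p < 2. Then the function V(x,t) = k t^{1/(2−p)} (∑ᵢ|xᵢ|^{p/(p−1)})^{−(p−1)/(2−p)}, for an appropriate constant k = k(N,p) > 0, is a classical solution of u_t = ∑ᵢ(|u_{xᵢ}|^{p−2}u_{xᵢ})_{xᵢ} on the set where all coordinates xᵢ are nonzero and t > 0. -/

import Mathlib

/-- Partial derivative along the i-th coordinate direction. -/
noncomputable def pderiv' (N : ℕ) (i : Fin N) (u : (Fin N → ℝ) → ℝ) (y : Fin N → ℝ) : ℝ :=
  deriv (fun t => u (Function.update y i t)) (y i)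

open Real Filter

lemma abs_rpow_hasDerivAt {q s : ℝ} (hs : s ≠ 0) :
    HasDerivAt (fun x : ℝ => |x| ^ q) (q * |s| ^ (q - 2) * s) s := by
  rcases hs.lt_or_gt with h | h
  · have h1 : HasDerivAt (fun x : ℝ => (-x) ^ q) ((q * (-s) ^ (q - 1)) * (-1)) s :=
      (Real.hasDerivAt_rpow_const (p := q) (Or.inl (neg_ne_zero.2 hs))).comp s (hasDerivAt_neg s)
    have h2 : (fun x : ℝ => |x| ^ q) =ᶠ[nhds s] (fun x : ℝ => (-x) ^ q) := by
      filter_upwards [eventually_lt_nhds h] with x hx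
      rw [abs_of_neg hx]
    have hv : q * |s| ^ (q - 2) * s = (q * (-s) ^ (q - 1)) * (-1) := by
      rw [abs_of_neg h, show q - 1 = (q - 2) + 1 by ring,
        Real.rpow_add_one (neg_ne_zero.2 hs)]
      ring
    rw [hv]
    exact h1.congr_of_eventuallyEq h2
  · have h1 : HasDerivAt (fun x : ℝ => x ^ q) (q * s ^ (q - 1)) s :=
      Real.hasDerivAt_rpow_const (p := q) (Or.inl hs)
    have h2 : (fun x : ℝ => |x| ^ q) =ᶠ[nhds s] (fun x : ℝ => x ^ q) := by
      filter_upwards [eventually_gt_nhds h] with x hx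
      rw [abs_of_pos hx]
    have hv : q * |s| ^ (q - 2) * s = q * s ^ (q - 1) := by
      rw [abs_of_pos h, show q - 1 = (q - 2) + 1 by ring, Real.rpow_add_one hs]
      ring
    rw [hv]
    exact h1.congr_of_eventuallyEq h2

/-- The very singular solution V(x,t) = k t^{1/(2−p)}(∑ᵢ|xᵢ|^{p/(p−1)})^{−(p−1)/(2−p)}
    solves the orthotropic p-Laplacian evolution classically away from the coordinate
    hyperplanes, for a suitable constant k = k(N,p) > 0. -/
theorem stmt18 (N : ℕ) (hN : 2 ≤ N) (p : ℝ)
    (hpc : 2 * N / ((N : ℝ) + 1) < p) (hp2 : p < 2) :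
    ∃ k : ℝ, 0 < k ∧
      ∀ (x : Fin N → ℝ) (t : ℝ), (∀ i, x i ≠ 0) → 0 < t →
        deriv (fun s : ℝ =>
            k * s ^ (1 / (2 - p)) * (∑ i, |x i| ^ (p / (p - 1))) ^ (-(p - 1) / (2 - p))) t
          = ∑ i, pderiv' N i (fun y =>
              |pderiv' N i (fun z =>
                  k * t ^ (1 / (2 - p)) * (∑ j, |z j| ^ (p / (p - 1))) ^ (-(p - 1) / (2 - p))) y|
                    ^ (p - 2)
                * pderiv' N i (fun z =>
                  k * t ^ (1 / (2 - p)) * (∑ j, |z j| ^ (p / (p - 1))) ^ (-(p - 1) / (2 - p))) y)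
              x := by
  have hN2 : (2 : ℝ) ≤ (N : ℝ) := by exact_mod_cast hN
  have hNpos : (0 : ℝ) < (N : ℝ) + 1 := by linarith
  rw [div_lt_iff₀ hNpos] at hpc
  have hp1 : 1 < p := by nlinarith
  have h2p : (0 : ℝ) < 2 - p := by linarith
  have hp0 : (0 : ℝ) < p - 1 := by linarith
  set q := p / (p - 1) with hq_def
  set a := 1 / (2 - p) with ha_def
  set b := -(p - 1) / (2 - p) with hb_def
  have hq1 : 1 < q := by rw [hq_def, lt_div_iff₀ hp0]; linarith
  have hq0 : (0 : ℝ) < q := by linarith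
  have hqp : (q - 1) * (p - 1) = 1 := by rw [hq_def]; field_simp; ring
  have hb_neg : b < 0 := div_neg_of_neg_of_pos (by linarith) h2p
  have hm : (b - 1) * (p - 1) = b := by rw [hb_def]; field_simp; ring
  have ha_pos : 0 < a := by rw [ha_def]; positivity
  have ha1 : a * (p - 1) = a - 1 := by rw [ha_def]; field_simp; ring
  set D := p / (2 - p) - N with hD_def
  have hD : 0 < D := by
    rw [hD_def, sub_pos, lt_div_iff₀ h2p]; nlinarith
  have hbqN : b * q + N = -D := by rw [hb_def, hq_def, hD_def]; field_simp; ring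
  have hbq_pos : 0 < |b| * q := mul_pos (abs_pos.2 hb_neg.ne) hq0
  set C := (|b| * q) ^ (p - 1) * D * (2 - p) with hC_def
  have hC : 0 < C :=
    mul_pos (mul_pos (Real.rpow_pos_of_pos hbq_pos _) hD) h2p
  set k := C ^ a with hk_def
  have hk : 0 < k := Real.rpow_pos_of_pos hC a
  have hkey : k * a = k ^ (p - 1) * ((|b| * q) ^ (p - 1) * D) := by
    have h2a : (2 - p) * a = 1 := by rw [ha_def]; field_simp
    have h1 : k ^ (2 - p) = C := by
      rw [hk_def, ← Real.rpow_mul hC.le, show a * (2 - p) = 1 by linarith [h2a],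
        Real.rpow_one]
    have h2 : k * a = k ^ (p - 1) * k ^ (2 - p) * a := by
      rw [← Real.rpow_add hk, show p - 1 + (2 - p) = 1 by ring, Real.rpow_one]
    rw [h2, h1, hC_def]
    linear_combination k ^ (p - 1) * (|b| * q) ^ (p - 1) * D * h2a
  refine ⟨k, hk, ?_⟩
  intro x t hx ht
  set S := ∑ i, |x i| ^ q with hS_def
  have hS : 0 < S :=
    Finset.sum_pos (fun i _ => Real.rpow_pos_of_pos (abs_pos.2 (hx i)) q)
      ⟨⟨0, by omega⟩, Finset.mem_univ _⟩
  have hL : deriv (fun s : ℝ => k * s ^ a * S ^ b) t = k * (a * t ^ (a - 1)) * S ^ b :=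
    (((Real.hasDerivAt_rpow_const (p := a) (Or.inl ht.ne')).const_mul k).mul_const
      (S ^ b)).deriv
  rw [hL]
  set V : (Fin N → ℝ) → ℝ := fun z => k * t ^ a * (∑ j, |z j| ^ q) ^ b with hV_def
  set K := k * t ^ a * (b * q) with hK_def
  have hta : 0 < t ^ a := Real.rpow_pos_of_pos ht a
  have hK_neg : K < 0 :=
    mul_neg_of_pos_of_neg (mul_pos hk hta) (mul_neg_of_neg_of_pos hb_neg hq0)
  have hKabs : |K| = k * t ^ a * (|b| * q) := by
    rw [hK_def, abs_mul, abs_mul, abs_mul, abs_of_pos hk, abs_of_pos hta, abs_of_pos hq0]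
  set E := |K| ^ (p - 1) with hE_def
  have key : ∀ i : Fin N,
      pderiv' N i (fun y => |pderiv' N i V y| ^ (p - 2) * pderiv' N i V y) x
        = -(E * (b * q * S ^ (b - 1) * |x i| ^ q + S ^ b)) := by
    intro i
    set Wi : (Fin N → ℝ) → ℝ :=
      fun y => |pderiv' N i V y| ^ (p - 2) * pderiv' N i V y with hWi_def
    set A := ∑ j ∈ Finset.univ.erase i, |x j| ^ q with hA_def
    have hA0 : 0 ≤ A := Finset.sum_nonneg fun j _ => Real.rpow_nonneg (abs_nonneg _) q
    have hupd : ∀ s : ℝ, (∑ j, |Function.update x i s j| ^ q) = |s| ^ q + A := by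
      intro s
      rw [← Finset.add_sum_erase _ (fun j => |Function.update x i s j| ^ q)
        (Finset.mem_univ i), Function.update_self]
      congr 1
      exact Finset.sum_congr rfl fun j hj => by
        rw [Function.update_of_ne (Finset.ne_of_mem_erase hj)]
    have hSA : S = |x i| ^ q + A := by
      rw [hS_def, ← Finset.add_sum_erase _ (fun j => |x j| ^ q) (Finset.mem_univ i)]
    set F : ℝ → ℝ := fun s => k * t ^ a * (|s| ^ q + A) ^ b with hF_def
    have hVF : ∀ s : ℝ,
        (fun s' => V (Function.update (Function.update x i s) i s')) = F := by
      intro s; funext s'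
      simp only [Function.update_idem, hV_def, hF_def, hupd]
    have hpd : ∀ s : ℝ, pderiv' N i V (Function.update x i s) = deriv F s := by
      intro s
      unfold pderiv'
      rw [hVF s, Function.update_self]
    have hXpos : ∀ s : ℝ, s ≠ 0 → 0 < |s| ^ q + A := fun s hs =>
      add_pos_of_pos_of_nonneg (Real.rpow_pos_of_pos (abs_pos.2 hs) q) hA0
    have hF' : ∀ s : ℝ, s ≠ 0 →
        HasDerivAt F (K * ((|s| ^ q + A) ^ (b - 1) * (|s| ^ (q - 2) * s))) s := by
      intro s hs
      have h1 : HasDerivAt (fun s : ℝ => |s| ^ q + A) (q * |s| ^ (q - 2) * s) s :=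
        (abs_rpow_hasDerivAt hs).add_const A
      have h2 : HasDerivAt (fun X : ℝ => X ^ b) (b * (|s| ^ q + A) ^ (b - 1))
          (|s| ^ q + A) := Real.hasDerivAt_rpow_const (Or.inl (hXpos s hs).ne')
      have h3 := (h2.comp s h1).const_mul (k * t ^ a)
      exact h3.congr_deriv (by rw [hK_def]; ring)
    have hG : ∀ s : ℝ, s ≠ 0 →
        |deriv F s| ^ (p - 2) * deriv F s = -(E * ((|s| ^ q + A) ^ b * s)) := by
      intro s hs
      rw [(hF' s hs).deriv]
      have hX := hXpos s hs
      have hw : (0 : ℝ) < |s| := abs_pos.2 hs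
      have hu : (0 : ℝ) < |K| := abs_pos.2 hK_neg.ne
      have h4 : |K * ((|s| ^ q + A) ^ (b - 1) * (|s| ^ (q - 2) * s))|
          = |K| * ((|s| ^ q + A) ^ (b - 1) * (|s| ^ (q - 2) * |s|)) := by
        rw [abs_mul K, abs_mul ((|s| ^ q + A) ^ (b - 1)), abs_mul (|s| ^ (q - 2)),
          abs_of_pos (Real.rpow_pos_of_pos hX _), abs_of_pos (Real.rpow_pos_of_pos hw _)]
      have h5 : |s| ^ (q - 2) * |s| = |s| ^ (q - 1) := by
        rw [show q - 1 = q - 2 + 1 by ring, Real.rpow_add_one hw.ne']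
      have h6 : (|K| * ((|s| ^ q + A) ^ (b - 1) * |s| ^ (q - 1))) ^ (p - 2)
          = |K| ^ (p - 2) * ((|s| ^ q + A) ^ ((b - 1) * (p - 2))
              * |s| ^ ((q - 1) * (p - 2))) := by
        rw [Real.mul_rpow hu.le (by positivity), Real.mul_rpow (by positivity) (by positivity),
          ← Real.rpow_mul hX.le, ← Real.rpow_mul hw.le]
      rw [h4, h5, h6]
      have eu : |K| ^ (p - 2) * |K| = |K| ^ (p - 1) := by
        rw [show p - 1 = p - 2 + 1 by ring, Real.rpow_add_one hu.ne']
      have ev : (|s| ^ q + A) ^ ((b - 1) * (p - 2)) * (|s| ^ q + A) ^ (b - 1)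
          = (|s| ^ q + A) ^ b := by
        rw [← Real.rpow_add hX]; congr 1; linear_combination hm
      have ew : |s| ^ ((q - 1) * (p - 2)) * |s| ^ (q - 2) = 1 := by
        rw [← Real.rpow_add hw, show (q - 1) * (p - 2) + (q - 2) = 0 by
          linear_combination hqp, Real.rpow_zero]
      have hKu : K = -|K| := by rw [abs_of_neg hK_neg]; ring
      linear_combination
        ((|s| ^ q + A) ^ b * s) * hE_def
        + (|K| ^ (p - 2) * (|s| ^ q + A) ^ ((b - 1) * (p - 2)) * |s| ^ ((q - 1) * (p - 2))
            * (|s| ^ q + A) ^ (b - 1) * |s| ^ (q - 2) * s) * hKu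
        - ((|s| ^ q + A) ^ ((b - 1) * (p - 2)) * (|s| ^ q + A) ^ (b - 1)
            * |s| ^ ((q - 1) * (p - 2)) * |s| ^ (q - 2) * s) * eu
        - (|K| ^ (p - 1) * |s| ^ ((q - 1) * (p - 2)) * |s| ^ (q - 2) * s) * ev
        - (|K| ^ (p - 1) * (|s| ^ q + A) ^ b * s) * ew
    have hxi : x i ≠ 0 := hx i
    have hXi : 0 < |x i| ^ q + A := hXpos _ hxi
    have hH : HasDerivAt (fun s : ℝ => -(E * ((|s| ^ q + A) ^ b * s)))
        (-(E * (b * (|x i| ^ q + A) ^ (b - 1) * (q * |x i| ^ (q - 2) * x i) * x i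
            + (|x i| ^ q + A) ^ b))) (x i) := by
      have h1 : HasDerivAt (fun s : ℝ => |s| ^ q + A) (q * |x i| ^ (q - 2) * x i) (x i) :=
        (abs_rpow_hasDerivAt hxi).add_const A
      have h2 : HasDerivAt (fun X : ℝ => X ^ b) (b * (|x i| ^ q + A) ^ (b - 1))
          (|x i| ^ q + A) := Real.hasDerivAt_rpow_const (Or.inl hXi.ne')
      have h3 := (((h2.comp (x i) h1).mul (hasDerivAt_id (x i))).const_mul E).neg
      exact h3.congr_deriv (by simp only [Function.comp_apply, id_eq]; ring)
    have hGH : (fun s => |deriv F s| ^ (p - 2) * deriv F s)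
        =ᶠ[nhds (x i)] fun s => -(E * ((|s| ^ q + A) ^ b * s)) := by
      filter_upwards [eventually_ne_nhds hxi] with s hs using hG s hs
    have houter : pderiv' N i Wi x
        = deriv (fun s => |deriv F s| ^ (p - 2) * deriv F s) (x i) := by
      have h8 : (fun s => Wi (Function.update x i s))
          = fun s => |deriv F s| ^ (p - 2) * deriv F s := by
        funext s
        simp only [hWi_def, hpd]
      unfold pderiv'
      rw [h8]
    rw [houter, hGH.deriv_eq, hH.deriv]
    have hne : |x i| ≠ 0 := abs_ne_zero.2 hxi
    have h7 : |x i| ^ (q - 2) * x i * x i = |x i| ^ q := by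
      calc |x i| ^ (q - 2) * x i * x i
          = |x i| ^ (q - 2) * (|x i| * |x i|) := by rw [mul_assoc, ← abs_mul_abs_self]
        _ = |x i| ^ (q - 2 + 1 + 1) := by
            rw [← mul_assoc, ← Real.rpow_add_one hne, ← Real.rpow_add_one hne]
        _ = |x i| ^ q := by rw [show q - 2 + 1 + 1 = q by ring]
    rw [← hSA]
    linear_combination (-(E * b * q * S ^ (b - 1))) * h7
  rw [Finset.sum_congr rfl fun i _ => key i]
  have hsum : ∑ i : Fin N, -(E * (b * q * S ^ (b - 1) * |x i| ^ q + S ^ b))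
      = -(E * (b * q * S ^ (b - 1))) * S + N * -(E * S ^ b) := by
    calc ∑ i : Fin N, -(E * (b * q * S ^ (b - 1) * |x i| ^ q + S ^ b))
        = ∑ i : Fin N, (-(E * (b * q * S ^ (b - 1))) * |x i| ^ q + -(E * S ^ b)) :=
          Finset.sum_congr rfl fun i _ => by ring
      _ = -(E * (b * q * S ^ (b - 1))) * (∑ i : Fin N, |x i| ^ q) + N * -(E * S ^ b) := by
          rw [Finset.sum_add_distrib, ← Finset.mul_sum, Finset.sum_const,
            Finset.card_univ, Fintype.card_fin, nsmul_eq_mul]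
      _ = -(E * (b * q * S ^ (b - 1))) * S + N * -(E * S ^ b) := by rw [← hS_def]
  rw [hsum]
  have hSb : S ^ (b - 1) * S = S ^ b := by
    nth_rewrite 2 [show b = b - 1 + 1 by ring]
    rw [Real.rpow_add_one hS.ne']
  have hE2 : E = k ^ (p - 1) * (|b| * q) ^ (p - 1) * t ^ (a - 1) := by
    rw [hE_def, hKabs, Real.mul_rpow (by positivity) hbq_pos.le,
      Real.mul_rpow hk.le hta.le, ← Real.rpow_mul ht.le, ha1]
    ring
  rw [hE2]
  linear_combination (t ^ (a - 1) * S ^ b) * hkey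
    + (k ^ (p - 1) * (|b| * q) ^ (p - 1) * t ^ (a - 1) * S ^ b) * hbqN
    + (k ^ (p - 1) * (|b| * q) ^ (p - 1) * (b * q) * t ^ (a - 1)) * hSb
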